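/- For every b > 0, ∫_1^∞ b (z² − 1) e^{−bz − z²/2} dz ≤ (b(b+2) + 2) e^{−b} / b². -/

import Mathlib

open MeasureTheory Real Set Filter Topology

/-- The second integral in the proof of Corollary 1:
`∫_1^∞ b (z² - 1) e^{-bz - z²/2} dz ≤ (b(b+2) + 2) e^{-b} / b²` for every `b > 0`. -/
theorem integral_bound_on_tail (b : ℝ) (hb : 0 < b) :
    ∫ z in Set.Ici (1 : ℝ), b * (z ^ 2 - 1) * Real.exp (-b * z - z ^ 2 / 2) ≤
      (b * (b + 2) + 2) * Real.exp (-b) / b ^ 2 := by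
  have hbne : b ≠ 0 := hb.ne'
  set f : ℝ → ℝ := fun z => b * (z ^ 2 - 1) * Real.exp (-b * z - z ^ 2 / 2) with hf
  set g : ℝ → ℝ := fun z => b * z ^ 2 * Real.exp (-b * z) with hg
  set F : ℝ → ℝ := fun z => -(z ^ 2 + 2 * z / b + 2 / b ^ 2) * Real.exp (-b * z) with hF
  have hderiv : ∀ z : ℝ, HasDerivAt F (g z) z := by
    intro z
    have h1 : HasDerivAt (fun z : ℝ => -(z ^ 2 + 2 * z / b + 2 / b ^ 2))
        (-(2 * z + 2 / b)) z := by
      have := ((hasDerivAt_pow 2 z).add (((hasDerivAt_id z).const_mul 2).div_const b)).add_const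
        (2 / b ^ 2)
      refine this.neg.congr_deriv ?_
      ring
    have h2 : HasDerivAt (fun z : ℝ => Real.exp (-b * z)) (-b * Real.exp (-b * z)) z := by
      have := ((hasDerivAt_id z).const_mul (-b)).exp
      simpa [mul_comm] using this
    have := h1.mul h2
    refine this.congr_deriv ?_
    simp only [hg]
    field_simp
    ring
  have hgnonneg : ∀ z ∈ Ioi (1:ℝ), 0 ≤ g z := by
    intro z _
    exact mul_nonneg (mul_nonneg hb.le (sq_nonneg z)) (Real.exp_pos _).le
  have htend : Tendsto F atTop (𝓝 0) := by
    have key : ∀ n : ℕ, Tendsto (fun z : ℝ => z ^ n * Real.exp (-b * z)) atTop (𝓝 0) := by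
      intro n
      apply (tendsto_rpow_mul_exp_neg_mul_atTop_nhds_zero n b hb).congr'
      filter_upwards [eventually_gt_atTop (0:ℝ)] with z hz
      rw [Real.rpow_natCast]
    have h2 := key 2
    have h1 := key 1
    have h0 := key 0
    have : Tendsto (fun z : ℝ => -(z ^ 2 * Real.exp (-b * z)
        + (2 / b) * (z ^ 1 * Real.exp (-b * z)) + (2 / b ^ 2) * (z ^ 0 * Real.exp (-b * z))))
        atTop (𝓝 (-(0 + (2 / b) * 0 + (2 / b ^ 2) * 0))) :=
      ((h2.add ((h1.const_mul _))).add (h0.const_mul _)).neg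
    simp only [mul_zero, add_zero, neg_zero, zero_add] at this
    convert this using 2 with z
    simp only [hF]
    ring
  have hcont : ContinuousOn F (Ici 1) := fun z _ => (hderiv z).continuousAt.continuousWithinAt
  have hderiv' : ∀ z ∈ Ioi (1:ℝ), HasDerivAt F (g z) z := fun z _ => hderiv z
  have hint_g : IntegrableOn g (Ioi 1) :=
    integrableOn_Ioi_deriv_of_nonneg ((hderiv 1).continuousAt.continuousWithinAt) hderiv' hgnonneg htend
  have hval : ∫ z in Ioi (1:ℝ), g z = 0 - F 1 :=
    integral_Ioi_of_hasDerivAt_of_nonneg ((hderiv 1).continuousAt.continuousWithinAt) hderiv' hgnonneg htend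
  have hle : ∀ z ∈ Ici (1:ℝ), f z ≤ g z := by
    intro z hz
    have hz1 : (1:ℝ) ≤ z := hz
    have hexp : Real.exp (-b * z - z ^ 2 / 2) ≤ Real.exp (-b * z) := by
      apply Real.exp_le_exp.2
      nlinarith [sq_nonneg z]
    have h1 : b * (z ^ 2 - 1) * Real.exp (-b * z - z ^ 2 / 2)
        ≤ b * z ^ 2 * Real.exp (-b * z - z ^ 2 / 2) := by
      apply mul_le_mul_of_nonneg_right _ (Real.exp_pos _).le
      nlinarith
    have h2 : b * z ^ 2 * Real.exp (-b * z - z ^ 2 / 2) ≤ b * z ^ 2 * Real.exp (-b * z) :=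
      mul_le_mul_of_nonneg_left hexp (mul_nonneg hb.le (sq_nonneg z))
    exact h1.trans h2
  have hfnonneg : ∀ z ∈ Ici (1:ℝ), 0 ≤ f z := by
    intro z hz
    have hz1 : (1:ℝ) ≤ z := hz
    apply mul_nonneg (mul_nonneg hb.le _) (Real.exp_pos _).le
    nlinarith
  have hint_f : IntegrableOn f (Ioi 1) := by
    apply hint_g.mono' (Continuous.aestronglyMeasurable (by continuity)).restrict
    filter_upwards [ae_restrict_mem measurableSet_Ioi] with z hz
    rw [Real.norm_eq_abs, abs_of_nonneg (hfnonneg z (Ioi_subset_Ici_self hz))]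
    exact hle z (Ioi_subset_Ici_self hz)
  have hmono : ∫ z in Ioi (1:ℝ), f z ≤ ∫ z in Ioi (1:ℝ), g z := by
    apply setIntegral_mono_on hint_f hint_g measurableSet_Ioi
    intro z hz
    exact hle z (Ioi_subset_Ici_self hz)
  calc ∫ z in Set.Ici (1:ℝ), b * (z ^ 2 - 1) * Real.exp (-b * z - z ^ 2 / 2)
      = ∫ z in Ioi (1:ℝ), f z := MeasureTheory.integral_Ici_eq_integral_Ioi
    _ ≤ ∫ z in Ioi (1:ℝ), g z := hmono
    _ = 0 - F 1 := hval
    _ = (b * (b + 2) + 2) * Real.exp (-b) / b ^ 2 := by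
        simp only [hF]
        field_simp
        ring
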